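/- Let n >= 1 and consider the type-B associahedron graph b_n on centrally symmetric triangulations of the regular (2n+2)-gon. Then b_n is a regular graph of degree n, and its vertex classes Psi(D_1), ..., Psi(D_{n+1}) indexed by the n+1 central diagonals partition the vertex set, with each vertex of Psi(D) having at most one neighbor outside Psi(D). -/

import Mathlib

open scoped BigOperators

/-- `x` lies strictly inside the (clockwise) arc from `a` to `b` of the regular `m`-gon,
whose vertices are labeled by `ZMod m`. -/
def arcMem (m : ℕ) (a b x : ZMod m) : Prop :=
  0 < (x - a).val ∧ (x - a).val < (b - a).val

/-- Ordered version of the crossing predicate for the chords `{a,b}` and `{c,d}`: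
exactly one of `c, d` lies strictly inside the open arc from `a` to `b`. -/
def crossPairs (m : ℕ) (a b c d : ZMod m) : Prop :=
  (arcMem m a b c ∧ arcMem m b a d) ∨ (arcMem m a b d ∧ arcMem m b a c)

/-- Two chords of the convex `m`-gon cross (in their interiors). -/
def Crosses (m : ℕ) (e f : Sym2 (ZMod m)) : Prop :=
  ∃ a b c d : ZMod m, e = s(a, b) ∧ f = s(c, d) ∧ crossPairs m a b c d

/-- `e` is a diagonal of the convex `m`-gon: its endpoints are distinct and non-adjacent. -/
def IsDiagonal (m : ℕ) (e : Sym2 (ZMod m)) : Prop :=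
  ∃ a b : ZMod m, e = s(a, b) ∧ a ≠ b ∧ b ≠ a + 1 ∧ a ≠ b + 1

/-- A triangulation of the convex `m`-gon: a maximal set of pairwise non-crossing diagonals. -/
def IsTriangulation (m : ℕ) (T : Finset (Sym2 (ZMod m))) : Prop :=
  (∀ e ∈ T, IsDiagonal m e) ∧
  (∀ e ∈ T, ∀ f ∈ T, ¬ Crosses m e f) ∧
  (∀ e, IsDiagonal m e → e ∉ T → ∃ f ∈ T, Crosses m e f)

/-- A diagonal of the regular `(2n+2)`-gon is central if it joins two opposite vertices,
i.e. passes through the center of the polygon. -/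
def IsCentral (n : ℕ) (e : Sym2 (ZMod (2 * n + 2))) : Prop :=
  ∃ a : ZMod (2 * n + 2), e = s(a, a + (n : ZMod (2 * n + 2)) + 1)

/-- The central diagonal of the regular `(2n+2)`-gon with endpoint `a`. -/
def centralDiag (n : ℕ) (a : ZMod (2 * n + 2)) : Sym2 (ZMod (2 * n + 2)) :=
  s(a, a + (n : ZMod (2 * n + 2)) + 1)

/-- A centrally-symmetric triangulation of the regular `(2n+2)`-gon: a triangulation invariant
under 180-degree rotation, i.e. under adding `n+1` to every vertex label. -/
def CSTriangulation (n : ℕ) (T : Finset (Sym2 (ZMod (2 * n + 2)))) : Prop :=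
  IsTriangulation (2 * n + 2) T ∧
  ∀ e ∈ T, Sym2.map (· + ((n : ZMod (2 * n + 2)) + 1)) e ∈ T

/-- The 1-skeleton of the type-B associahedron `\U0001d51f\u2099`: vertices are the centrally
symmetric triangulations of the regular `(2n+2)`-gon, and two triangulations are adjacent
iff they differ in a single flip (of the central diagonal, or of a centrally symmetric pair
of diagonals), i.e. iff they differ in at most one centrally symmetric orbit of diagonals. -/
def typeBGraph (n : ℕ) :
    SimpleGraph {T : Finset (Sym2 (ZMod (2 * n + 2))) // CSTriangulation n T} where
  Adj T T' := T ≠ T' ∧ (T.val \ T'.val).card ≤ 2 ∧ (T'.val \ T.val).card ≤ 2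
  symm := ⟨fun _ _ h => ⟨Ne.symm h.1, h.2.2, h.2.1⟩⟩
  loopless := ⟨fun _ h => h.1 rfl⟩

namespace TypeBProof

open scoped Classical

set_option linter.unusedSectionVars false
set_option maxHeartbeats 1600000

lemma sym2_rep {α : Type*} (z : Sym2 α) : ∃ x y, z = s(x, y) :=
  Sym2.ind (fun x y => ⟨x, y, rfl⟩) z

variable {M : ℕ} [NeZero M]

def len (a b : ZMod M) : ℕ := (b - a).val

lemma len_lt (a b : ZMod M) : len a b < M := ZMod.val_lt _

lemma len_eq_zero {a b : ZMod M} : len a b = 0 ↔ a = b := by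
  unfold len
  rw [ZMod.val_eq_zero, sub_eq_zero, eq_comm]

lemma len_self (a : ZMod M) : len a a = 0 := len_eq_zero.mpr rfl

lemma len_inj {a x y : ZMod M} (h : len a x = len a y) : x = y := by
  have := ZMod.val_injective M h
  have h2 : x - a = y - a := this
  have := sub_left_injective h2
  exact this

lemma val_sub_cases (u v : ZMod M) :
    (v.val ≤ u.val ∧ (u - v).val = u.val - v.val) ∨
    (u.val < v.val ∧ (u - v).val = u.val + M - v.val) := by
  rcases le_or_gt v.val u.val with h | h
  · exact Or.inl ⟨h, ZMod.val_sub h⟩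
  · refine Or.inr ⟨h, ?_⟩
    have hv : v ≠ 0 := by rintro rfl; simp [ZMod.val_zero] at h
    haveI : NeZero v := ⟨hv⟩
    rw [sub_eq_add_neg, ZMod.val_add, ZMod.val_neg_of_ne_zero]
    have h1 := ZMod.val_lt u
    have h2 := ZMod.val_lt v
    have h3 : 0 < v.val := Nat.pos_of_ne_zero (fun h' => hv ((ZMod.val_eq_zero v).mp h'))
    rw [Nat.mod_eq_of_lt (by omega)]
    omega

lemma len_split (a x y : ZMod M) :
    (len a x ≤ len a y ∧ len x y = len a y - len a x) ∨
    (len a y < len a x ∧ len x y = len a y + M - len a x) := by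
  have h : y - x = (y - a) - (x - a) := by ring
  unfold len
  rw [h]
  exact val_sub_cases (y - a) (x - a)

lemma len_add_len {a b : ZMod M} (h : a ≠ b) : len a b + len b a = M := by
  have h1 : (b - a) + (a - b) = 0 := by ring
  have h2 := ZMod.val_add (b - a) (a - b)
  rw [h1, ZMod.val_zero] at h2
  have h3 := ZMod.val_lt (b - a)
  have h4 := ZMod.val_lt (a - b)
  have h5 : (b - a).val ≠ 0 := by
    simp only [ne_eq, ZMod.val_eq_zero, sub_eq_zero]
    exact fun hh => h hh.symm
  unfold len
  rcases Nat.lt_or_ge ((b - a).val + (a - b).val) M with hl | hl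
  · rw [Nat.mod_eq_of_lt hl] at h2; omega
  · have hlt : (b - a).val + (a - b).val - M < M := by omega
    rw [Nat.mod_eq_sub_mod hl, Nat.mod_eq_of_lt hlt] at h2
    omega

lemma len_one {a b : ZMod M} (hM : 1 < M) : len a b = 1 ↔ b = a + 1 := by
  haveI : Fact (1 < M) := ⟨hM⟩
  unfold len
  constructor
  · intro h
    have : b - a = (1 : ZMod M) := ZMod.val_injective M (by rw [h, ZMod.val_one])
    rw [sub_eq_iff_eq_add] at this
    rw [this, add_comm]
  · rintro rfl
    simp [ZMod.val_one]

/-! ### crossing machinery -/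

def cyc (C X D : ℕ) : Prop := (C < X ∧ X < D) ∨ (X < D ∧ D < C) ∨ (D < C ∧ C < X)

lemma arc_iff (a : ZMod M) {c d x : ZMod M} :
    arcMem M c d x ↔ cyc (len a c) (len a x) (len a d) := by
  have s1 := len_split a c x
  have s2 := len_split a c d
  have h1 : (x - c).val = len c x := rfl
  have h2 : (d - c).val = len c d := rfl
  have b1 := len_lt a c
  have b2 := len_lt a d
  have b3 := len_lt a x
  have b4 := len_lt c x
  have b5 := len_lt c d
  unfold arcMem cyc
  rw [h1, h2]
  omega

lemma crossPairs_comm_left {a b c d : ZMod M} : crossPairs M a b c d ↔ crossPairs M b a c d := by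
  unfold crossPairs; tauto

lemma crossPairs_comm_right {a b c d : ZMod M} : crossPairs M a b c d ↔ crossPairs M a b d c := by
  unfold crossPairs; tauto

lemma crosses_iff {a b c d : ZMod M} : Crosses M s(a,b) s(c,d) ↔ crossPairs M a b c d := by
  constructor
  · rintro ⟨a', b', c', d', he, hf, hcp⟩
    rw [Sym2.eq_iff] at he hf
    rcases he with ⟨rfl, rfl⟩ | ⟨rfl, rfl⟩ <;> rcases hf with ⟨rfl, rfl⟩ | ⟨rfl, rfl⟩
    · exact hcp
    · exact crossPairs_comm_right.mpr hcp
    · exact crossPairs_comm_left.mpr hcp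
    · exact crossPairs_comm_left.mpr (crossPairs_comm_right.mpr hcp)
  · intro h; exact ⟨a, b, c, d, rfl, rfl, h⟩

set_option maxHeartbeats 1000000 in
lemma crossPairs_symm {a b c d : ZMod M} (h : crossPairs M a b c d) : crossPairs M c d a b := by
  have haa := len_self a
  simp only [crossPairs, arc_iff a, cyc] at h ⊢
  omega

lemma crosses_symm {e f : Sym2 (ZMod M)} (h : Crosses M e f) : Crosses M f e := by
  obtain ⟨a, b, c, d, rfl, rfl, hcp⟩ := h
  exact ⟨c, d, a, b, rfl, rfl, crossPairs_symm hcp⟩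

lemma diagonal_iff {a b : ZMod M} (hM : 1 < M) :
    IsDiagonal M s(a,b) ↔ 2 ≤ len a b ∧ 2 ≤ len b a := by
  constructor
  · rintro ⟨a', b', he, h1, h2, h3⟩
    have k1 : len a' b' ≠ 0 := fun h => h1 (len_eq_zero.mp h)
    have k2 : len a' b' ≠ 1 := fun h => h2 ((len_one hM).mp h)
    have k3 : len b' a' ≠ 1 := fun h => h3 ((len_one hM).mp h)
    have k4 : len b' a' ≠ 0 := fun h => h1 (len_eq_zero.mp h).symm
    rw [Sym2.eq_iff] at he
    rcases he with ⟨rfl, rfl⟩ | ⟨rfl, rfl⟩ <;> omega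
  · rintro ⟨h1, h2⟩
    refine ⟨a, b, rfl, ?_, ?_, ?_⟩
    · intro h; have := len_eq_zero.mpr h; omega
    · intro h; have := (len_one hM).mpr h; omega
    · intro h; have := (len_one hM).mpr h; omega

/-- A side (length-1 chord) crosses nothing. -/
lemma side_no_cross {a b c d : ZMod M} (h : len a b = 1) :
    ¬ crossPairs M a b c d ∧ ¬ crossPairs M c d a b := by
  have haa := len_self a
  have b1 := len_lt a b
  have b2 := len_lt a c
  have b3 := len_lt a d
  simp only [crossPairs, arc_iff a, cyc]
  omega

/-! ### triangulations -/

section Tri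

variable (T : Finset (Sym2 (ZMod M)))

/-- `a` and `b` joined by an element of `T` or by a polygon side. -/
def EdgeT (a b : ZMod M) : Prop := s(a,b) ∈ T ∨ len a b = 1 ∨ len b a = 1

variable {T}

lemma edgeT_symm {a b : ZMod M} (h : EdgeT T a b) : EdgeT T b a := by
  unfold EdgeT at h ⊢
  rw [Sym2.eq_swap] at h
  tauto

variable (hT : IsTriangulation M T)
include hT

lemma edges_no_cross {a b c d : ZMod M} (h1 : EdgeT T a b) (h2 : EdgeT T c d) :
    ¬ crossPairs M a b c d := by
  rcases h1 with h1 | h1 | h1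
  · rcases h2 with h2 | h2 | h2
    · exact fun hc => hT.2.1 _ h1 _ h2 (crosses_iff.mpr hc)
    · exact fun hc => (side_no_cross h2).2 hc
    · exact fun hc => (side_no_cross h2).2 (crossPairs_comm_right.mp hc)
  · exact fun hc => (side_no_cross h1).1 hc
  · exact fun hc => (side_no_cross h1).1 (crossPairs_comm_left.mp hc)

/-- Apex: every edge of a triangulation, seen from a given side, supports a unique triangle. -/
lemma apex_exists {a b : ZMod M} (hE : EdgeT T a b) (h2 : 2 ≤ len a b) :
    ∃ c, arcMem M a b c ∧ EdgeT T a c ∧ EdgeT T c b := by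
  have hM : 1 < M := lt_of_le_of_lt (by omega : 1 ≤ len a b) (len_lt a b)
  set S : Finset (ZMod M) := Finset.univ.filter (fun c => arcMem M a b c ∧ EdgeT T a c) with hS
  have hne : S.Nonempty := by
    refine ⟨a + 1, ?_⟩
    rw [hS, Finset.mem_filter]
    have hl1 : len a (a+1) = 1 := (len_one hM).mpr rfl
    refine ⟨Finset.mem_univ _, ⟨?_, Or.inr (Or.inl hl1)⟩⟩
    unfold arcMem
    have : (a + 1 - a).val = len a (a+1) := rfl
    have : len a (a+1) = 1 := hl1
    show 0 < len a (a+1) ∧ len a (a+1) < len a b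
    omega
  obtain ⟨c, hcS, hmax⟩ := S.exists_max_image (fun c => len a c) hne
  rw [hS, Finset.mem_filter] at hcS
  obtain ⟨-, hc_arc, hc_edge⟩ := hcS
  refine ⟨c, hc_arc, hc_edge, ?_⟩
  by_cases hside : len c b = 1
  · exact Or.inr (Or.inl hside)
  left
  by_contra hnotin
  -- set up coordinates
  have haa := len_self a
  have hb := len_lt a b
  have hcpos : 0 < len a c ∧ len a c < len a b := hc_arc
  have hcb : len a c + len c b = len a b := by
    have := len_split a c b
    omega
  have hbc : len b c + len c b = M := by
    have hcb' : c ≠ b := by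
      intro h; subst h; omega
    have := len_add_len hcb'
    have hx : len b c + len c b = len c b + len b c := by omega
    omega
  have hdiag : IsDiagonal M s(c, b) := by
    rw [diagonal_iff hM]
    omega
  obtain ⟨f, hfT, hcross⟩ := hT.2.2 _ hdiag hnotin
  obtain ⟨x, y, rfl⟩ := sym2_rep f
  rw [crosses_iff] at hcross
  have main : ∀ u v : ZMod M, s(u,v) ∈ T → arcMem M c b u → arcMem M b c v →
      len a v = 0 ∧ len a c < len a u ∧ len a u < len a b := by
    intro u v huv hu hv
    have nc1 : ¬ crossPairs M a b u v := edges_no_cross hT hE (Or.inl huv)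
    have nc2 : ¬ crossPairs M a c u v := edges_no_cross hT hc_edge (Or.inl huv)
    rw [arc_iff a] at hu hv
    unfold cyc at hu hv
    have bu := len_lt a u
    have bv := len_lt a v
    have hu' : len a c < len a u ∧ len a u < len a b := by omega
    have hv' : len a v < len a c ∨ len a b < len a v := by omega
    rcases hv' with hv' | hv'
    · rcases Nat.eq_zero_or_pos (len a v) with h0 | h0
      · exact ⟨h0, hu'⟩
      · exfalso
        refine nc2 (Or.inr ⟨?_, ?_⟩) <;> rw [arc_iff a] <;> unfold cyc <;> omega
    · exfalso
      refine nc1 (Or.inl ⟨?_, ?_⟩) <;> rw [arc_iff a] <;> unfold cyc <;> omega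
  have final : ∀ u v : ZMod M, s(u, v) ∈ T → len a v = 0 →
      len a c < len a u → len a u < len a b → False := by
    intro u v huv hv hu1 hu2
    have hva : v = a := (len_eq_zero.mp hv).symm
    rw [hva] at huv
    have huS : u ∈ S := by
      rw [hS, Finset.mem_filter]
      refine ⟨Finset.mem_univ _, ?_, Or.inl (by rwa [Sym2.eq_swap])⟩
      show 0 < len a u ∧ len a u < len a b
      omega
    have := hmax u huS
    omega
  rcases hcross with ⟨hx, hy⟩ | ⟨hy, hx⟩
  · obtain ⟨k1, k2, k3⟩ := main x y hfT hx hy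
    exact final x y hfT k1 k2 k3
  · obtain ⟨k1, k2, k3⟩ := main y x (by rwa [Sym2.eq_swap]) hy hx
    exact final y x (by rwa [Sym2.eq_swap]) k1 k2 k3

lemma apex_unique {a b c c' : ZMod M} (h2 : 2 ≤ len a b)
    (hc : arcMem M a b c) (hc1 : EdgeT T a c) (hc2 : EdgeT T c b)
    (hc' : arcMem M a b c') (hc1' : EdgeT T a c') (hc2' : EdgeT T c' b) : c = c' := by
  by_contra hne
  have haa := len_self a
  have hb := len_lt a b
  have hcc : len a c ≠ len a c' := fun h => hne (len_inj h)
  -- wlog len a c < len a c' ; then s(a,c') crosses s(c,b)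
  have cross1 : ∀ u v : ZMod M, arcMem M a b u → arcMem M a b v → len a u < len a v →
      crossPairs M a v u b := by
    intro u v hu hv huv
    have h1 : 0 < len a u ∧ len a u < len a b := hu
    have h2' : 0 < len a v ∧ len a v < len a b := hv
    simp only [crossPairs, arc_iff a, cyc]
    omega
  rcases Nat.lt_or_ge (len a c) (len a c') with h | h
  · exact edges_no_cross hT hc1' hc2 (cross1 c c' hc hc' h)
  · exact edges_no_cross hT hc1 hc2' (cross1 c' c hc' hc (by omega))

end Tri
end TypeBProof

namespace TypeBProof
section Count

open scoped Classical

set_option linter.unusedSectionVars false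
set_option maxHeartbeats 1600000

variable {M : ℕ} [NeZero M] {T : Finset (Sym2 (ZMod M))}

/-- Elements of `T` lying (weakly) inside the region cut by the chord `(a,b)`. -/
noncomputable def inT (T : Finset (Sym2 (ZMod M))) (a b : ZMod M) : Finset (Sym2 (ZMod M)) :=
  T.filter (fun f => ∀ x ∈ f, x = a ∨ x = b ∨ arcMem M a b x)

lemma cond_iff {a b x : ZMod M} : (x = a ∨ x = b ∨ arcMem M a b x) ↔ len a x ≤ len a b := by
  have haa := len_self a
  constructor
  · rintro (rfl | rfl | h)
    · omega
    · omega
    · rw [arc_iff a] at h; unfold cyc at h; omega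
  · intro h
    rcases Nat.eq_zero_or_pos (len a x) with h0 | h0
    · exact Or.inl (len_eq_zero.mp h0).symm
    rcases Nat.eq_or_lt_of_le h with h1 | h1
    · exact Or.inr (Or.inl (len_inj h1))
    · refine Or.inr (Or.inr ?_)
      rw [arc_iff a]; unfold cyc; omega

lemma mem_inT {a b x y : ZMod M} :
    s(x,y) ∈ inT T a b ↔ s(x,y) ∈ T ∧ len a x ≤ len a b ∧ len a y ≤ len a b := by
  unfold inT
  rw [Finset.mem_filter]
  constructor
  · rintro ⟨h1, h2⟩
    exact ⟨h1, cond_iff.mp (h2 x (Sym2.mem_mk_left x y)), cond_iff.mp (h2 y (Sym2.mem_mk_right x y))⟩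
  · rintro ⟨h1, h2, h3⟩
    refine ⟨h1, ?_⟩
    intro z hz
    rw [Sym2.mem_iff] at hz
    rcases hz with rfl | rfl
    · exact cond_iff.mpr h2
    · exact cond_iff.mpr h3

variable (hT : IsTriangulation M T) (hM : 4 ≤ M)
include hT hM

lemma diag_facts {x y : ZMod M} (h : s(x,y) ∈ T) : 2 ≤ len x y ∧ 2 ≤ len y x :=
  (diagonal_iff (by omega)).mp (hT.1 _ h)

lemma count_side {a b : ZMod M} (h1 : len a b = 1) : (inT T a b).card = 0 := by
  rw [Finset.card_eq_zero]
  apply Finset.eq_empty_of_forall_notMem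
  intro f hf
  obtain ⟨x, y, rfl⟩ := sym2_rep f
  rw [mem_inT] at hf
  obtain ⟨hfT, hx, hy⟩ := hf
  obtain ⟨d1, d2⟩ := diag_facts hT hM hfT
  have s1 := len_split a x y
  have s2 := len_split a y x
  omega

lemma count_main : ∀ k a b, EdgeT T a b → len a b = k → 2 ≤ k →
    (inT T a b).card + 1 + (if s(a,b) ∈ T then 0 else 1) = k := by
  intro k
  induction k using Nat.strong_induction_on with
  | _ k IH =>
  intro a b hE hlen hk2
  have hM1 : (1:ℕ) < M := by omega
  have hB := len_lt a b
  have haa := len_self a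
  obtain ⟨c, hc, hac, hcb⟩ := apex_exists hT hE (by omega)
  have hcpos : 0 < len a c ∧ len a c < len a b := hc
  have hsplit : len a c + len c b = len a b := by
    have := len_split a c b; omega
  have hca : len c a = M - len a c := by
    have hne : a ≠ c := by
      intro h; rw [← h, len_self] at hcpos; omega
    have := len_add_len hne; omega
  -- decomposition
  have decomp : inT T a b = (inT T a c ∪ inT T c b) ∪
      (if s(a,b) ∈ T then {s(a,b)} else ∅) := by
    ext f
    obtain ⟨x, y, rfl⟩ := sym2_rep f
    constructor
    · intro hf
      rw [mem_inT] at hf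
      obtain ⟨hfT, hx, hy⟩ := hf
      obtain ⟨d1, d2⟩ := diag_facts hT hM hfT
      have sxy := len_split a x y
      have ecx := len_split a c x
      have ecy := len_split a c y
      have hcbE : len c b = len a b - len a c := by omega
      have memU1 : len a x ≤ len a c → len a y ≤ len a c →
          s(x,y) ∈ (inT T a c ∪ inT T c b) ∪ (if s(a,b) ∈ T then {s(a,b)} else ∅) := by
        intro h1 h2
        refine Finset.mem_union_left _ (Finset.mem_union_left _ ?_)
        rw [mem_inT]; exact ⟨hfT, h1, h2⟩
      have memU2 : len a c ≤ len a x → len a c ≤ len a y →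
          s(x,y) ∈ (inT T a c ∪ inT T c b) ∪ (if s(a,b) ∈ T then {s(a,b)} else ∅) := by
        intro h1 h2
        refine Finset.mem_union_left _ (Finset.mem_union_right _ ?_)
        rw [mem_inT]
        refine ⟨hfT, by omega, by omega⟩
      have memAB : len a x = 0 → len a y = len a b →
          s(x,y) ∈ (inT T a c ∪ inT T c b) ∪ (if s(a,b) ∈ T then {s(a,b)} else ∅) := by
        intro h1 h2
        have hxa : x = a := by
          refine len_inj (a := a) ?_; omega
        have hyb : y = b := len_inj (a := a) (by omega)
        have hfeq : s(x,y) = s(a,b) := by rw [hxa, hyb]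
        rw [hfeq] at hfT ⊢
        rw [if_pos hfT]
        exact Finset.mem_union_right _ (Finset.mem_singleton_self _)
      rcases Nat.lt_or_ge (len a x) (len a c) with cx | cx <;>
        rcases Nat.lt_or_ge (len a y) (len a c) with cy | cy
      · exact memU1 (by omega) (by omega)
      · -- x < C ≤ y
        rcases Nat.eq_or_lt_of_le cy with hyc | hyc
        · exact memU1 (by omega) (by omega)
        by_cases hx0 : len a x = 0
        · by_cases hyB : len a y = len a b
          · exact memAB hx0 hyB
          · exfalso
            refine edges_no_cross hT hcb (Or.inl hfT) (Or.inr ⟨?_, ?_⟩) <;>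
              rw [arc_iff a] <;> unfold cyc <;> omega
        · exfalso
          refine edges_no_cross hT hac (Or.inl hfT) (Or.inl ⟨?_, ?_⟩) <;>
            rw [arc_iff a] <;> unfold cyc <;> omega
      · -- y < C ≤ x
        rcases Nat.eq_or_lt_of_le cx with hxc | hxc
        · exact memU1 (by omega) (by omega)
        by_cases hy0 : len a y = 0
        · by_cases hxB : len a x = len a b
          · have hya : y = a := len_inj (a := a) (by omega)
            have hxb : x = b := len_inj (a := a) (by omega)
            have hfeq : s(x,y) = s(a,b) := by rw [hxb, hya]; exact Sym2.eq_swap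
            rw [hfeq] at hfT ⊢
            rw [if_pos hfT]
            exact Finset.mem_union_right _ (Finset.mem_singleton_self _)
          · exfalso
            refine edges_no_cross hT hcb (Or.inl hfT) (Or.inl ⟨?_, ?_⟩) <;>
              rw [arc_iff a] <;> unfold cyc <;> omega
        · exfalso
          refine edges_no_cross hT hac (Or.inl hfT) (Or.inr ⟨?_, ?_⟩) <;>
            rw [arc_iff a] <;> unfold cyc <;> omega
      · exact memU2 (by omega) (by omega)
    · intro hf
      rcases Finset.mem_union.mp hf with hf | hf
      · rcases Finset.mem_union.mp hf with hf | hf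
        · rw [mem_inT] at hf ⊢
          obtain ⟨h1, h2, h3⟩ := hf
          exact ⟨h1, by omega, by omega⟩
        · rw [mem_inT] at hf ⊢
          obtain ⟨h1, h2, h3⟩ := hf
          have e1 := len_split a c x
          have e2 := len_split a c y
          have := len_lt a x
          have := len_lt a y
          exact ⟨h1, by omega, by omega⟩
      · by_cases hmem : s(a,b) ∈ T
        · rw [if_pos hmem, Finset.mem_singleton] at hf
          rw [hf, mem_inT]
          exact ⟨hmem, by omega, by omega⟩
        · rw [if_neg hmem] at hf
          exact absurd hf (Finset.notMem_empty _)
  -- disjointness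
  have hdisj1 : Disjoint (inT T a c) (inT T c b) := by
    rw [Finset.disjoint_left]
    intro f hf1 hf2
    obtain ⟨x, y, rfl⟩ := sym2_rep f
    rw [mem_inT] at hf1 hf2
    obtain ⟨hfT, k1, k2⟩ := hf1
    obtain ⟨-, k3, k4⟩ := hf2
    obtain ⟨d1, d2⟩ := diag_facts hT hM hfT
    have e1 := len_split a c x
    have e2 := len_split a c y
    have := len_lt a x
    have := len_lt a y
    have hcbE : len c b = len a b - len a c := by omega
    have hxc : x = c := len_inj (a := a) (by omega)
    have hyc : y = c := len_inj (a := a) (by omega)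
    rw [hxc, hyc] at d1
    rw [len_self] at d1
    omega
  have hdisj2 : Disjoint (inT T a c ∪ inT T c b) (if s(a,b) ∈ T then {s(a,b)} else ∅) := by
    by_cases hmem : s(a,b) ∈ T
    · rw [if_pos hmem, Finset.disjoint_right]
      intro f hf
      rw [Finset.mem_singleton] at hf
      subst hf
      rw [Finset.mem_union, mem_inT, mem_inT]
      have hcab : len c a = M - len a c := hca
      push_neg
      constructor
      · intro _ _; omega
      · intro _ h; omega
    · rw [if_neg hmem]
      exact Finset.disjoint_empty_right _
  -- subarc edges are actual diagonals of T when long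
  have hacT : 2 ≤ len a c → s(a,c) ∈ T := by
    intro h2
    rcases hac with h | h | h
    · exact h
    · omega
    · omega
  have hcbT : 2 ≤ len c b → s(c,b) ∈ T := by
    intro h2
    rcases hcb with h | h | h
    · exact h
    · omega
    · have hbc : len b c = M - len c b := by
        have hne : c ≠ b := by
          intro hh
          have : len c b = 0 := len_eq_zero.mpr hh
          omega
        have := len_add_len hne; omega
      omega
  -- cards of the two sub-regions
  have hU1 : (inT T a c).card = len a c - 1 := by
    rcases Nat.eq_or_lt_of_le (show 1 ≤ len a c by omega) with h1 | h1
    · rw [count_side hT hM h1.symm]; omega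
    · have := IH (len a c) (by omega) a c hac rfl (by omega)
      rw [if_pos (hacT (by omega))] at this
      omega
  have hU2 : (inT T c b).card = len c b - 1 := by
    rcases Nat.eq_or_lt_of_le (show 1 ≤ len c b by omega) with h1 | h1
    · rw [count_side hT hM h1.symm]; omega
    · have := IH (len c b) (by omega) c b hcb rfl (by omega)
      rw [if_pos (hcbT (by omega))] at this
      omega
  rw [decomp, Finset.card_union_of_disjoint hdisj2, Finset.card_union_of_disjoint hdisj1,
    hU1, hU2]
  by_cases hmem : s(a,b) ∈ T
  · rw [if_pos hmem, if_pos hmem, Finset.card_singleton]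
    omega
  · rw [if_neg hmem, if_neg hmem, Finset.card_empty]
    omega

/-- Every triangulation of the `M`-gon has exactly `M - 3` diagonals. -/
lemma card_T : T.card = M - 3 := by
  have hM1 : (1:ℕ) < M := by omega
  set a : ZMod M := 0 with ha
  set b : ZMod M := 0 - 1 with hb
  have hba : len b a = 1 := by
    rw [len_one hM1]; rw [ha, hb]; ring
  have hne : a ≠ b := by
    intro h
    have : len b a = 0 := len_eq_zero.mpr h.symm
    omega
  have hab : len a b = M - 1 := by
    have := len_add_len hne; omega
  have hE : EdgeT T a b := Or.inr (Or.inr hba)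
  have hinT : inT T a b = T := by
    apply Finset.Subset.antisymm
    · exact Finset.filter_subset _ _
    · intro f hf
      obtain ⟨x, y, rfl⟩ := sym2_rep f
      rw [mem_inT]
      have := len_lt a x
      have := len_lt a y
      exact ⟨hf, by omega, by omega⟩
  have hnotmem : s(a,b) ∉ T := by
    intro h
    have := (diag_facts hT hM h).2
    omega
  have := count_main hT hM (M-1) a b hE hab (by omega)
  rw [if_neg hnotmem, hinT] at this
  omega

end Count
end TypeBProof

namespace TypeBProof
section CS

open scoped Classical

set_option linter.unusedSectionVars false
set_option maxHeartbeats 1600000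

variable {n : ℕ}

instance : NeZero (2*n+2) := ⟨by omega⟩

/-- the half-turn rotation -/
def sg (n : ℕ) (x : ZMod (2*n+2)) : ZMod (2*n+2) := x + ((n : ZMod (2*n+2)) + 1)

/-- the half-turn rotation on chords -/
def Sg (n : ℕ) : Sym2 (ZMod (2*n+2)) → Sym2 (ZMod (2*n+2)) := Sym2.map (sg n)

lemma shift_val : ((n : ZMod (2*n+2)) + 1).val = n + 1 := by
  haveI : Fact (1 < 2*n+2) := ⟨by omega⟩
  have h1 : ((n : ZMod (2*n+2))).val = n := ZMod.val_cast_of_lt (by omega)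
  rw [ZMod.val_add, h1, ZMod.val_one, Nat.mod_eq_of_lt (by omega)]

lemma len_sg_self (x : ZMod (2*n+2)) : len x (sg n x) = n + 1 := by
  unfold len sg
  rw [add_sub_cancel_left]
  exact shift_val

lemma sg_sg (x : ZMod (2*n+2)) : sg n (sg n x) = x := by
  unfold sg
  have h := ZMod.natCast_self (2*n+2)
  push_cast at h
  linear_combination h

lemma sg_ne (x : ZMod (2*n+2)) : sg n x ≠ x := by
  intro h
  have h1 : len x (sg n x) = n + 1 := len_sg_self x
  rw [h, len_self] at h1
  omega

lemma len_sg_sg (x y : ZMod (2*n+2)) : len (sg n x) (sg n y) = len x y := by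
  unfold len sg
  congr 1
  ring

lemma Sg_mk (x y : ZMod (2*n+2)) : Sg n s(x,y) = s(sg n x, sg n y) := by
  unfold Sg
  rfl

lemma Sg_invol (e : Sym2 (ZMod (2*n+2))) : Sg n (Sg n e) = e := by
  obtain ⟨x, y, rfl⟩ := sym2_rep e
  rw [Sg_mk, Sg_mk, sg_sg, sg_sg]

lemma central_iff {x y : ZMod (2*n+2)} : IsCentral n s(x,y) ↔ len x y = n + 1 := by
  constructor
  · rintro ⟨a, he⟩
    have hsga : a + (n : ZMod (2*n+2)) + 1 = sg n a := by
      unfold sg; ring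
    rw [hsga, Sym2.eq_iff] at he
    have h1 : len a (sg n a) = n + 1 := len_sg_self a
    have hne : a ≠ sg n a := fun h => sg_ne a h.symm
    have h2 := len_add_len hne
    rcases he with ⟨rfl, rfl⟩ | ⟨rfl, rfl⟩
    · exact h1
    · omega
  · intro h
    refine ⟨x, ?_⟩
    have : y = sg n x := by
      have h1 : (y - x).val = ((n : ZMod (2*n+2)) + 1).val := by
        rw [shift_val]; exact h
      have h2 : y - x = (n : ZMod (2*n+2)) + 1 := ZMod.val_injective _ h1
      have := sub_eq_iff_eq_add.mp h2
      rw [this]; unfold sg; ring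
    rw [this]
    congr 1
    unfold sg; ring

lemma central_iff' {e : Sym2 (ZMod (2*n+2))} :
    IsCentral n e ↔ ∃ x y, e = s(x,y) ∧ len x y = n + 1 := by
  obtain ⟨x, y, rfl⟩ := sym2_rep e
  constructor
  · intro h; exact ⟨x, y, rfl, central_iff.mp h⟩
  · rintro ⟨u, v, he, hl⟩
    rw [he]; exact central_iff.mpr hl

lemma sg_fixed_iff_central {e : Sym2 (ZMod (2*n+2))} (hn : 1 ≤ n) :
    Sg n e = e ↔ IsCentral n e := by
  obtain ⟨x, y, rfl⟩ := sym2_rep e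
  rw [Sg_mk, Sym2.eq_iff, central_iff]
  have h1 := len_sg_self x
  have h2 := len_sg_self y
  constructor
  · rintro (⟨h3, h4⟩ | ⟨h3, h4⟩)
    · exact absurd h3 (sg_ne x)
    · rw [← h3]; exact h1
  · intro h
    right
    have : y = sg n x := by
      have h3 : (y - x).val = ((n : ZMod (2*n+2)) + 1).val := by rw [shift_val]; exact h
      have h4 : y - x = (n : ZMod (2*n+2)) + 1 := ZMod.val_injective _ h3
      have := sub_eq_iff_eq_add.mp h4
      rw [this]; unfold sg; ring
    exact ⟨this.symm, by rw [this, sg_sg]⟩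

lemma centrals_cross (hn : 1 ≤ n) {x y u v : ZMod (2*n+2)}
    (h1 : len x y = n+1) (h2 : len u v = n+1) (hne : s(x,y) ≠ s(u,v)) :
    crossPairs (2*n+2) x y u v := by
  have hU := len_split x u v
  have bu := len_lt x u
  have bv := len_lt x v
  have hxx := len_self x
  have imp1 : ¬(len x u = 0 ∧ len x v = n+1) := by
    rintro ⟨ha, hb⟩
    refine hne ?_
    rw [Sym2.eq_iff]
    exact Or.inl ⟨len_eq_zero.mp ha, len_inj (a := x) (by omega)⟩
  have imp2 : ¬(len x v = 0 ∧ len x u = n+1) := by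
    rintro ⟨ha, hb⟩
    refine hne ?_
    rw [Sym2.eq_iff]
    exact Or.inr ⟨len_eq_zero.mp ha, len_inj (a := x) (by omega)⟩
  simp only [crossPairs, arc_iff x, cyc]
  omega

/-- parity: an involution of a finite set without fixed points forces even cardinality -/
lemma even_card_of_no_fixed {α : Type*} [DecidableEq α] :
    ∀ (s : Finset α) (f : α → α), (∀ a ∈ s, f a ∈ s) → (∀ a, f (f a) = a) →
      (∀ a ∈ s, f a ≠ a) → Even s.card := by
  intro s
  induction s using Finset.strongInduction with
  | _ s IH =>
  intro f hmap hinv hnf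
  rcases s.eq_empty_or_nonempty with rfl | ⟨a, ha⟩
  · simp
  · have hfa : f a ∈ s := hmap a ha
    have hne : f a ≠ a := hnf a ha
    set t := (s.erase a).erase (f a) with ht
    have htsub : t ⊂ s := by
      refine Finset.ssubset_iff_of_subset ?_ |>.mpr ⟨a, ha, ?_⟩
      · intro z hz
        exact Finset.mem_of_mem_erase (Finset.mem_of_mem_erase hz)
      · intro hz
        exact (Finset.ne_of_mem_erase (Finset.mem_of_mem_erase hz)) rfl
    have hcard : t.card = s.card - 2 := by
      rw [ht, Finset.card_erase_of_mem (Finset.mem_erase.mpr ⟨hne, hfa⟩),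
        Finset.card_erase_of_mem ha]
      omega
    have hmapt : ∀ b ∈ t, f b ∈ t := by
      intro b hb
      rw [ht, Finset.mem_erase, Finset.mem_erase] at hb ⊢
      obtain ⟨hb1, hb2, hb3⟩ := hb
      refine ⟨?_, ?_, hmap b hb3⟩
      · intro h
        apply hb2
        rw [← hinv b, h, hinv]
      · intro h
        apply hb1
        rw [← hinv b, h]
    have hnft : ∀ b ∈ t, f b ≠ b := by
      intro b hb
      exact hnf b (Finset.mem_of_mem_erase (Finset.mem_of_mem_erase hb))
    have := IH t htsub f hmapt hinv hnft
    have hs2 : 2 ≤ s.card := by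
      have : f a ∈ s.erase a := Finset.mem_erase.mpr ⟨hne, hfa⟩
      have h1 : 1 ≤ (s.erase a).card := Finset.card_pos.mpr ⟨f a, this⟩
      have h2 := Finset.card_erase_of_mem ha
      omega
    rcases this with ⟨m, hm⟩
    exact ⟨m + 1, by omega⟩

section CST
variable {T : Finset (Sym2 (ZMod (2*n+2)))} (hCS : CSTriangulation n T) (hn : 1 ≤ n)
include hCS

lemma Sg_mem {e : Sym2 (ZMod (2*n+2))} : e ∈ T ↔ Sg n e ∈ T := by
  constructor
  · intro h; exact hCS.2 e h
  · intro h
    have := hCS.2 _ h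
    rwa [show Sym2.map (· + ((n : ZMod (2 * n + 2)) + 1)) (Sg n e) = Sg n (Sg n e) from rfl,
      Sg_invol] at this

include hn

lemma card_T_CS : T.card = 2*n - 1 := by
  have := card_T hCS.1 (by omega : 4 ≤ 2*n+2)
  omega

/-- every centrally symmetric triangulation contains a unique central diagonal -/
lemma exists_unique_central : ∃! D : Sym2 (ZMod (2*n+2)), IsCentral n D ∧ D ∈ T := by
  have hodd : ¬ Even T.card := by
    rw [card_T_CS hCS hn]
    intro ⟨m, hm⟩
    omega
  have hfix : ∃ e ∈ T, Sg n e = e := by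
    by_contra hno
    push_neg at hno
    exact hodd (even_card_of_no_fixed T (Sg n) (fun a ha => (Sg_mem hCS).mp ha)
      Sg_invol hno)
  obtain ⟨D, hDT, hDfix⟩ := hfix
  refine ⟨D, ⟨(sg_fixed_iff_central hn).mp hDfix, hDT⟩, ?_⟩
  rintro D' ⟨hD'c, hD'T⟩
  by_contra hne
  obtain ⟨x, y, rfl, h1⟩ := central_iff'.mp hD'c
  obtain ⟨u, v, rfl, h2⟩ := central_iff'.mp ((sg_fixed_iff_central hn).mp hDfix)
  exact hCS.1.2.1 _ hD'T _ hDT (crosses_iff.mpr (centrals_cross hn h1 h2 hne))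

end CST
end CS
end TypeBProof

namespace TypeBProof
section Key

set_option linter.unusedSectionVars false
set_option maxHeartbeats 1600000

variable {M : ℕ} [NeZero M]

lemma not_crossPairs_self {c d : ZMod M} : ¬ crossPairs M c d c d := by
  have := len_self c
  simp only [crossPairs, arc_iff c, cyc]
  omega

/-- KEY1: any chord crossing the new diagonal `(c,d)` of the quadrilateral `a c b d`
crosses one of the four sides, or crosses `(a,b)`, or equals `(a,b)`. -/
lemma key1 {a b c d x y : ZMod M}
    (hc : arcMem M a b c) (hd : arcMem M b a d)
    (hcross : crossPairs M c d x y) :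
    crossPairs M a c x y ∨ crossPairs M c b x y ∨ crossPairs M b d x y ∨
    crossPairs M d a x y ∨ crossPairs M a b x y ∨ (x = a ∧ y = b) ∨ (x = b ∧ y = a) := by
  have haa := len_self a
  have hB := len_lt a b
  have hC := len_lt a c
  have hD := len_lt a d
  have hX := len_lt a x
  have hY := len_lt a y
  rw [arc_iff a] at hc hd
  unfold cyc at hc hd
  -- positions: 0 < C < B < D < M
  have hCpos : 0 < len a c ∧ len a c < len a b := by omega
  have hDpos : len a b < len a d := by omega
  -- main ordered case
  have main : ∀ u v : ZMod M, arcMem M c d u → arcMem M d c v →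
      crossPairs M a c u v ∨ crossPairs M c b u v ∨ crossPairs M b d u v ∨
      crossPairs M d a u v ∨ crossPairs M a b u v ∨ (u = a ∧ v = b) ∨ (u = b ∧ v = a) := by
    intro u v hu hv
    rw [arc_iff a] at hu hv
    unfold cyc at hu hv
    have hU := len_lt a u
    have hV := len_lt a v
    have hu' : len a c < len a u ∧ len a u < len a d := by omega
    have hv' : len a v < len a c ∨ len a d < len a v := by omega
    rcases lt_trichotomy (len a u) (len a b) with hub | hub | hub
    · -- u ∈ (c,b) : crosses (c,b)
      refine Or.inr (Or.inl (Or.inl ⟨?_, ?_⟩)) <;> rw [arc_iff a] <;> unfold cyc <;> omega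
    · -- u = b
      have hub' : u = b := len_inj (a := a) (by omega)
      rcases hv' with hv' | hv'
      · rcases Nat.eq_zero_or_pos (len a v) with hv0 | hv0
        · exact Or.inr (Or.inr (Or.inr (Or.inr (Or.inr (Or.inr
            ⟨hub', (len_eq_zero.mp hv0).symm⟩)))))
        · -- v ∈ (a,c) : crosses (a,c)
          refine Or.inl (Or.inr ⟨?_, ?_⟩) <;> rw [arc_iff a] <;> unfold cyc <;> omega
      · -- v ∈ (d,a) : crosses (d,a)
        refine Or.inr (Or.inr (Or.inr (Or.inl (Or.inr ⟨?_, ?_⟩)))) <;>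
          rw [arc_iff a] <;> unfold cyc <;> omega
    · -- u ∈ (b,d) : crosses (b,d)
      refine Or.inr (Or.inr (Or.inl (Or.inl ⟨?_, ?_⟩))) <;>
        rw [arc_iff a] <;> unfold cyc <;> omega
  rcases hcross with ⟨hx', hy'⟩ | ⟨hy', hx'⟩
  · exact main x y hx' hy'
  · rcases main y x hy' hx' with h | h | h | h | h | ⟨h1, h2⟩ | ⟨h1, h2⟩
    · exact Or.inl (crossPairs_comm_right.mp h)
    · exact Or.inr (Or.inl (crossPairs_comm_right.mp h))
    · exact Or.inr (Or.inr (Or.inl (crossPairs_comm_right.mp h)))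
    · exact Or.inr (Or.inr (Or.inr (Or.inl (crossPairs_comm_right.mp h))))
    · exact Or.inr (Or.inr (Or.inr (Or.inr (Or.inl (crossPairs_comm_right.mp h)))))
    · exact Or.inr (Or.inr (Or.inr (Or.inr (Or.inr (Or.inr ⟨h2, h1⟩)))))
    · exact Or.inr (Or.inr (Or.inr (Or.inr (Or.inr (Or.inl ⟨h2, h1⟩)))))

/-- KEY2: a chord crossing `(a,b)` but none of the four sides of the quadrilateral
must be the other diagonal `(c,d)`. -/
lemma key2 {a b c d x y : ZMod M}
    (hc : arcMem M a b c) (hd : arcMem M b a d)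
    (hcross : crossPairs M a b x y)
    (n1 : ¬ crossPairs M a c x y) (n2 : ¬ crossPairs M c b x y)
    (n3 : ¬ crossPairs M b d x y) (n4 : ¬ crossPairs M d a x y) :
    (x = c ∧ y = d) ∨ (x = d ∧ y = c) := by
  have haa := len_self a
  have hB := len_lt a b
  have hC := len_lt a c
  have hD := len_lt a d
  have hX := len_lt a x
  have hY := len_lt a y
  rw [arc_iff a] at hc hd
  unfold cyc at hc hd
  have main : ∀ u v : ZMod M, arcMem M a b u → arcMem M b a v →
      (¬ crossPairs M a c u v) → (¬ crossPairs M c b u v) →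
      (¬ crossPairs M b d u v) → (¬ crossPairs M d a u v) →
      u = c ∧ v = d := by
    intro u v hu hv m1 m2 m3 m4
    rw [arc_iff a] at hu hv
    unfold cyc at hu hv
    have hU := len_lt a u
    have hV := len_lt a v
    have hu' : 0 < len a u ∧ len a u < len a b := by omega
    have hv' : len a b < len a v := by omega
    have hUc : len a u = len a c := by
      rcases lt_trichotomy (len a u) (len a c) with h | h | h
      · exfalso
        refine m1 (Or.inl ⟨?_, ?_⟩) <;> rw [arc_iff a] <;> unfold cyc <;> omega
      · exact h
      · exfalso
        refine m2 (Or.inl ⟨?_, ?_⟩) <;> rw [arc_iff a] <;> unfold cyc <;> omega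
    have hVd : len a v = len a d := by
      rcases lt_trichotomy (len a v) (len a d) with h | h | h
      · exfalso
        refine m3 (Or.inr ⟨?_, ?_⟩) <;> rw [arc_iff a] <;> unfold cyc <;> omega
      · exact h
      · exfalso
        refine m4 (Or.inr ⟨?_, ?_⟩) <;> rw [arc_iff a] <;> unfold cyc <;> omega
    exact ⟨len_inj (a := a) hUc, len_inj (a := a) hVd⟩
  rcases hcross with ⟨hx', hy'⟩ | ⟨hy', hx'⟩
  · exact Or.inl (main x y hx' hy'
      (fun h => n1 h) (fun h => n2 h) (fun h => n3 h) (fun h => n4 h))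
  · refine Or.inr ?_
    have := main y x hy' hx'
      (fun h => n1 (crossPairs_comm_right.mp h)) (fun h => n2 (crossPairs_comm_right.mp h))
      (fun h => n3 (crossPairs_comm_right.mp h)) (fun h => n4 (crossPairs_comm_right.mp h))
    exact ⟨this.2, this.1⟩

/-- the new diagonal crosses the old one -/
lemma new_crosses_old {a b c d : ZMod M}
    (hc : arcMem M a b c) (hd : arcMem M b a d) : crossPairs M a b c d :=
  Or.inl ⟨hc, hd⟩

/-- the new diagonal is a genuine diagonal -/
lemma new_is_diag {a b c d : ZMod M} (hM : 1 < M) (hab : 2 ≤ len a b) (hba : 2 ≤ len b a)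
    (hc : arcMem M a b c) (hd : arcMem M b a d) : IsDiagonal M s(c,d) := by
  rw [diagonal_iff hM]
  have haa := len_self a
  have hB := len_lt a b
  have hC := len_lt a c
  have hD := len_lt a d
  have hab' : a ≠ b := by intro h; have := len_eq_zero.mpr h; omega
  have htot := len_add_len hab'
  rw [arc_iff a] at hc hd
  unfold cyc at hc hd
  have s1 := len_split a c d
  have s2 := len_split a d c
  constructor <;> omega

section Quad
variable {T : Finset (Sym2 (ZMod M))} (hT : IsTriangulation M T)
include hT

/-- Sub-lemma A: the only element of `T` crossing the flipped diagonal is the old one. -/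
lemma quad_cross_unique {a b c d : ZMod M}
    (he : s(a,b) ∈ T)
    (hc : arcMem M a b c) (hac : EdgeT T a c) (hcb : EdgeT T c b)
    (hd : arcMem M b a d) (hbd : EdgeT T b d) (hda : EdgeT T d a)
    {t : Sym2 (ZMod M)} (ht : t ∈ T) (hcr : Crosses M t s(c,d)) : t = s(a,b) := by
  obtain ⟨x, y, rfl⟩ := sym2_rep t
  rw [crosses_iff] at hcr
  have hcr' : crossPairs M c d x y := crossPairs_symm hcr
  rcases key1 hc hd hcr' with h | h | h | h | h | ⟨rfl, rfl⟩ | ⟨rfl, rfl⟩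
  · exact absurd h (edges_no_cross hT hac (Or.inl ht))
  · exact absurd h (edges_no_cross hT hcb (Or.inl ht))
  · exact absurd h (edges_no_cross hT hbd (Or.inl ht))
  · exact absurd h (edges_no_cross hT hda (Or.inl ht))
  · exact absurd h (edges_no_cross hT (Or.inl he) (Or.inl ht))
  · rfl
  · exact Sym2.eq_swap

end Quad
end Key
end TypeBProof

namespace TypeBProof
section Flip

open scoped Classical

set_option linter.unusedSectionVars false
set_option maxHeartbeats 1600000

variable {n : ℕ}

lemma arc_sg {u v w : ZMod (2*n+2)} :
    arcMem (2*n+2) (sg n u) (sg n v) (sg n w) ↔ arcMem (2*n+2) u v w := by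
  unfold arcMem
  rw [show sg n w - sg n u = w - u by unfold sg; ring,
    show sg n v - sg n u = v - u by unfold sg; ring]

lemma crossPairs_sg {u v w z : ZMod (2*n+2)} :
    crossPairs (2*n+2) (sg n u) (sg n v) (sg n w) (sg n z) ↔ crossPairs (2*n+2) u v w z := by
  unfold crossPairs
  simp only [arc_sg]

lemma Crosses_sg {e f : Sym2 (ZMod (2*n+2))} :
    Crosses (2*n+2) (Sg n e) (Sg n f) ↔ Crosses (2*n+2) e f := by
  obtain ⟨a, b, rfl⟩ := sym2_rep e
  obtain ⟨c, d, rfl⟩ := sym2_rep f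
  rw [Sg_mk, Sg_mk, crosses_iff, crosses_iff, crossPairs_sg]

lemma not_crosses_self (e : Sym2 (ZMod (2*n+2))) : ¬ Crosses (2*n+2) e e := by
  obtain ⟨a, b, rfl⟩ := sym2_rep e
  rw [crosses_iff]
  exact not_crossPairs_self

lemma central_of_eq_sg {a b : ZMod (2*n+2)} (h : a = sg n b) : IsCentral n s(a,b) := by
  rw [central_iff]
  have h1 : len b (sg n b) = n + 1 := len_sg_self b
  have hne : b ≠ sg n b := fun hh => sg_ne b hh.symm
  have h2 := len_add_len hne
  rw [h]
  omega

lemma central_swap {a b : ZMod (2*n+2)} : IsCentral n s(a,b) ↔ IsCentral n s(b,a) := by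
  rw [Sym2.eq_swap]

lemma central_opp {a b : ZMod (2*n+2)} (h : IsCentral n s(a,b)) : b = sg n a := by
  rw [central_iff] at h
  have h1 : (b - a).val = ((n : ZMod (2*n+2)) + 1).val := by rw [shift_val]; exact h
  have h2 : b - a = (n : ZMod (2*n+2)) + 1 := ZMod.val_injective _ h1
  have := sub_eq_iff_eq_add.mp h2
  rw [this]; unfold sg; ring

section WithT
variable {T : Finset (Sym2 (ZMod (2*n+2)))} (hCS : CSTriangulation n T)
include hCS

lemma edgeT_sg {u v : ZMod (2*n+2)} (h : EdgeT T u v) : EdgeT T (sg n u) (sg n v) := by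
  rcases h with h | h | h
  · left
    have := hCS.2 _ h
    rw [Sym2.map_pair_eq] at this
    exact this
  · right; left; rwa [len_sg_sg]
  · right; right; rwa [len_sg_sg]

/-- the quadrilateral sides avoid the orbit `{e, Sg e}` of the flipped diagonal -/
lemma quad_sides_ne {a b c d : ZMod (2*n+2)} (hn : 1 ≤ n)
    (hab : 2 ≤ len a b) (hba : 2 ≤ len b a)
    (hc : arcMem (2*n+2) a b c) (hd : arcMem (2*n+2) b a d) :
    (s(a,c) ≠ s(a,b) ∧ s(a,c) ≠ Sg n s(a,b)) ∧
    (s(c,b) ≠ s(a,b) ∧ s(c,b) ≠ Sg n s(a,b)) ∧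
    (s(b,d) ≠ s(a,b) ∧ s(b,d) ≠ Sg n s(a,b)) ∧
    (s(d,a) ≠ s(a,b) ∧ s(d,a) ≠ Sg n s(a,b)) := by
  have haa := len_self a
  have hB := len_lt a b
  have hC := len_lt a c
  have hD := len_lt a d
  rw [arc_iff a] at hc hd
  unfold cyc at hc hd
  have hab' : a ≠ b := by
    intro h
    have := len_eq_zero.mpr h
    omega
  have htot := len_add_len hab'
  have lac : len a c < len a b := by omega
  have lad : len a b < len a d := by omega
  have hca : c ≠ a := by
    intro h
    have h2 : len a c = 0 := len_eq_zero.mpr h.symm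
    omega
  have hcb' : c ≠ b := by
    intro h
    have h2 : len a c = len a b := by rw [h]
    omega
  have hdb : d ≠ b := by
    intro h
    have h2 : len a d = len a b := by rw [h]
    omega
  have hda' : d ≠ a := by
    intro h
    have h2 : len a d = 0 := len_eq_zero.mpr h.symm
    omega
  have p1 : s(a,c) ≠ s(a,b) := by
    intro h
    rw [Sym2.eq_iff] at h
    rcases h with ⟨h1, h2⟩ | ⟨h1, h2⟩
    · exact hcb' h2
    · exact hab' h1
  have p3 : s(c,b) ≠ s(a,b) := by
    intro h
    rw [Sym2.eq_iff] at h
    rcases h with ⟨h1, h2⟩ | ⟨h1, h2⟩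
    · exact hca h1
    · exact hcb' h1
  have p5 : s(b,d) ≠ s(a,b) := by
    intro h
    rw [Sym2.eq_iff] at h
    rcases h with ⟨h1, h2⟩ | ⟨h1, h2⟩
    · exact hab' h1.symm
    · exact hda' h2
  have p7 : s(d,a) ≠ s(a,b) := by
    intro h
    rw [Sym2.eq_iff] at h
    rcases h with ⟨h1, h2⟩ | ⟨h1, h2⟩
    · exact hda' h1
    · exact hdb h1
  by_cases hcent : IsCentral n s(a,b)
  · have hfix : Sg n s(a,b) = s(a,b) := (sg_fixed_iff_central hn).mpr hcent
    rw [hfix]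
    exact ⟨⟨p1, p1⟩, ⟨p3, p3⟩, ⟨p5, p5⟩, ⟨p7, p7⟩⟩
  · have hasga : a ≠ sg n a := fun h => sg_ne a h.symm
    have hbsgb : b ≠ sg n b := fun h => sg_ne b h.symm
    have hasgb : a ≠ sg n b := fun h => hcent (central_of_eq_sg h)
    have hbsga : b ≠ sg n a := fun h => hcent (central_swap.mpr (central_of_eq_sg h))
    rw [Sg_mk]
    refine ⟨⟨p1, ?_⟩, ⟨p3, ?_⟩, ⟨p5, ?_⟩, ⟨p7, ?_⟩⟩ <;> intro h <;> rw [Sym2.eq_iff] at h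
    · rcases h with ⟨h1, h2⟩ | ⟨h1, h2⟩
      · exact hasga h1
      · exact hasgb h1
    · rcases h with ⟨h1, h2⟩ | ⟨h1, h2⟩
      · exact hbsgb h2
      · exact hbsga h2
    · rcases h with ⟨h1, h2⟩ | ⟨h1, h2⟩
      · exact hbsga h1
      · exact hbsgb h1
    · rcases h with ⟨h1, h2⟩ | ⟨h1, h2⟩
      · exact hasgb h2
      · exact hasga h2

end WithT
end Flip
end TypeBProof

namespace TypeBProof
section Master

open scoped Classical

set_option linter.unusedSectionVars false
set_option maxHeartbeats 1600000

variable {n : ℕ} {T : Finset (Sym2 (ZMod (2*n+2)))}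
variable (hCS : CSTriangulation n T) (hn : 1 ≤ n)
variable {a b c d : ZMod (2*n+2)}

section Quad
variable (he : s(a,b) ∈ T)
variable (hc : arcMem (2*n+2) a b c) (hac : EdgeT T a c) (hcb : EdgeT T c b)
variable (hd : arcMem (2*n+2) b a d) (hbd : EdgeT T b d) (hda : EdgeT T d a)
include hCS hn he hc hac hcb hd hbd hda

/-- Uniqueness: the flipped triangulation along the orbit of `s(a,b)` is forced. -/
lemma forced_eq {T' : Finset (Sym2 (ZMod (2*n+2)))}
    (hCS' : CSTriangulation n T') (hdiff : T \ T' = {s(a,b), Sg n s(a,b)}) :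
    T' = (T \ {s(a,b), Sg n s(a,b)}) ∪ {s(c,d), Sg n s(c,d)} := by
  have hM : (4:ℕ) ≤ 2*n+2 := by omega
  have hT := hCS.1
  have hT' := hCS'.1
  obtain ⟨hab, hba⟩ := diag_facts hT hM he
  obtain ⟨⟨q1, q1'⟩, ⟨q2, q2'⟩, ⟨q3, q3'⟩, ⟨q4, q4'⟩⟩ := quad_sides_ne hCS hn hab hba hc hd
  have hmemO : ∀ t, t ∈ T → (t ∉ T' ↔ (t = s(a,b) ∨ t = Sg n s(a,b))) := by
    intro t ht
    constructor
    · intro h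
      have h2 : t ∈ T \ T' := Finset.mem_sdiff.mpr ⟨ht, h⟩
      rw [hdiff, Finset.mem_insert, Finset.mem_singleton] at h2
      exact h2
    · intro h
      have h2 : t ∈ T \ T' := by
        rw [hdiff, Finset.mem_insert, Finset.mem_singleton]; exact h
      exact (Finset.mem_sdiff.mp h2).2
  have heT' : s(a,b) ∉ T' := (hmemO _ he).mpr (Or.inl rfl)
  have hSgeT : Sg n s(a,b) ∈ T := (Sg_mem hCS).mp he
  have hSgeT' : Sg n s(a,b) ∉ T' := (hmemO _ hSgeT).mpr (Or.inr rfl)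
  have hkeep : ∀ t, t ∈ T → t ≠ s(a,b) → t ≠ Sg n s(a,b) → t ∈ T' := by
    intro t ht h1 h2
    by_contra h
    rcases (hmemO t ht).mp h with h' | h'
    · exact h1 h'
    · exact h2 h'
  have hedge' : ∀ u v : ZMod (2*n+2), EdgeT T u v → s(u,v) ≠ s(a,b) →
      s(u,v) ≠ Sg n s(a,b) → EdgeT T' u v := by
    intro u v hE h1 h2
    rcases hE with hE | hE | hE
    · exact Or.inl (hkeep _ hE h1 h2)
    · exact Or.inr (Or.inl hE)
    · exact Or.inr (Or.inr hE)
  have hac' : EdgeT T' a c := hedge' _ _ hac q1 q1'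
  have hcb' : EdgeT T' c b := hedge' _ _ hcb q2 q2'
  have hbd' : EdgeT T' b d := hedge' _ _ hbd q3 q3'
  have hda' : EdgeT T' d a := hedge' _ _ hda q4 q4'
  have mainE : ∀ g, g ∈ T' → g ∉ T → Crosses (2*n+2) g s(a,b) → g = s(c,d) := by
    intro g hgT' hgT hcr
    obtain ⟨x, y, rfl⟩ := sym2_rep g
    rw [crosses_iff] at hcr
    have hcr' : crossPairs (2*n+2) a b x y := crossPairs_symm hcr
    have n1 : ¬ crossPairs (2*n+2) a c x y := edges_no_cross hT' hac' (Or.inl hgT')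
    have n2 : ¬ crossPairs (2*n+2) c b x y := edges_no_cross hT' hcb' (Or.inl hgT')
    have n3 : ¬ crossPairs (2*n+2) b d x y := edges_no_cross hT' hbd' (Or.inl hgT')
    have n4 : ¬ crossPairs (2*n+2) d a x y := edges_no_cross hT' hda' (Or.inl hgT')
    rcases key2 hc hd hcr' n1 n2 n3 n4 with ⟨rfl, rfl⟩ | ⟨rfl, rfl⟩
    · rfl
    · exact Sym2.eq_swap
  have hnew : ∀ g, g ∈ T' → g ∉ T → g = s(c,d) ∨ g = Sg n s(c,d) := by
    intro g hgT' hgT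
    obtain ⟨t, htT, hcr⟩ := hT.2.2 g (hT'.1 g hgT') hgT
    have htT'not : t ∉ T' := fun htT' => hT'.2.1 g hgT' t htT' hcr
    rcases (hmemO t htT).mp htT'not with rfl | h'
    · exact Or.inl (mainE _ hgT' hgT hcr)
    · right
      have hSgg : Sg n g ∈ T' := (Sg_mem hCS').mp hgT'
      have hSggT : Sg n g ∉ T := by
        intro hh
        apply hgT
        have h6 := (Sg_mem hCS).mp hh
        rwa [Sg_invol] at h6
      have hcr2 : Crosses (2*n+2) (Sg n g) s(a,b) := by
        rw [h'] at hcr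
        have h4 := Crosses_sg.mpr hcr
        rwa [Sg_invol] at h4
      have h5 := mainE _ hSgg hSggT hcr2
      rw [← Sg_invol (e := g), h5]
  have hnonempty : ∃ g ∈ T', g ∉ T := by
    by_contra h
    push_neg at h
    have hdE : IsDiagonal (2*n+2) s(a,b) := hT.1 _ he
    obtain ⟨f, hfT', hcrf⟩ := hT'.2.2 _ hdE heT'
    exact hT.2.1 _ he _ (h f hfT') hcrf
  obtain ⟨g0, hg0T', hg0T⟩ := hnonempty
  have hFmem : s(c,d) ∈ T' := by
    rcases hnew g0 hg0T' hg0T with rfl | h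
    · exact hg0T'
    · have h2 : Sg n g0 ∈ T' := (Sg_mem hCS').mp hg0T'
      rwa [h, Sg_invol] at h2
  have hSgFmem : Sg n s(c,d) ∈ T' := (Sg_mem hCS').mp hFmem
  ext t
  rw [Finset.mem_union, Finset.mem_sdiff, Finset.mem_insert, Finset.mem_singleton,
    Finset.mem_insert, Finset.mem_singleton]
  constructor
  · intro htT'
    by_cases htT : t ∈ T
    · left
      refine ⟨htT, ?_⟩
      rintro (rfl | rfl)
      · exact heT' htT'
      · exact hSgeT' htT'
    · exact Or.inr (hnew t htT' htT)
  · rintro (⟨htT, hne⟩ | rfl | rfl)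
    · push_neg at hne
      exact hkeep t htT hne.1 hne.2
    · exact hFmem
    · exact hSgFmem

/-- Existence: flipping the orbit of `s(a,b)` produces a centrally symmetric triangulation. -/
lemma flip_works :
    CSTriangulation n ((T \ {s(a,b), Sg n s(a,b)}) ∪ {s(c,d), Sg n s(c,d)}) ∧
    T \ ((T \ {s(a,b), Sg n s(a,b)}) ∪ {s(c,d), Sg n s(c,d)}) = {s(a,b), Sg n s(a,b)} ∧
    ((T \ {s(a,b), Sg n s(a,b)}) ∪ {s(c,d), Sg n s(c,d)}) \ T = {s(c,d), Sg n s(c,d)} := by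
  have hM : (4:ℕ) ≤ 2*n+2 := by omega
  have hM1 : (1:ℕ) < 2*n+2 := by omega
  have hT := hCS.1
  obtain ⟨hab, hba⟩ := diag_facts hT hM he
  obtain ⟨⟨q1, q1'⟩, ⟨q2, q2'⟩, ⟨q3, q3'⟩, ⟨q4, q4'⟩⟩ := quad_sides_ne hCS hn hab hba hc hd
  have hSgeT : Sg n s(a,b) ∈ T := (Sg_mem hCS).mp he
  set T0 : Finset (Sym2 (ZMod (2*n+2))) :=
    (T \ {s(a,b), Sg n s(a,b)}) ∪ {s(c,d), Sg n s(c,d)} with hT0def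
  have hmem : ∀ t, t ∈ T0 ↔ ((t ∈ T ∧ t ≠ s(a,b) ∧ t ≠ Sg n s(a,b)) ∨
      t = s(c,d) ∨ t = Sg n s(c,d)) := by
    intro t
    rw [hT0def, Finset.mem_union, Finset.mem_sdiff, Finset.mem_insert, Finset.mem_singleton,
      Finset.mem_insert, Finset.mem_singleton]
    constructor
    · rintro (⟨h1, h2⟩ | h)
      · exact Or.inl ⟨h1, fun hh => h2 (Or.inl hh), fun hh => h2 (Or.inr hh)⟩
      · exact Or.inr h
    · rintro (⟨h1, h2, h3⟩ | h)
      · left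
        refine ⟨h1, ?_⟩
        rintro (hh | hh)
        · exact h2 hh
        · exact h3 hh
      · exact Or.inr h
  have hCrEF : Crosses (2*n+2) s(a,b) s(c,d) := crosses_iff.mpr (Or.inl ⟨hc, hd⟩)
  have hFnotT : s(c,d) ∉ T := fun hF => hT.2.1 _ he _ hF hCrEF
  have hSgFnotT : Sg n s(c,d) ∉ T := by
    intro hh
    apply hFnotT
    have h6 := (Sg_mem hCS).mp hh
    rwa [Sg_invol] at h6
  have A : ∀ t ∈ T, Crosses (2*n+2) t s(c,d) → t = s(a,b) :=
    fun t ht hcr => quad_cross_unique hT he hc hac hcb hd hbd hda ht hcr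
  have A' : ∀ t ∈ T, Crosses (2*n+2) t (Sg n s(c,d)) → t = Sg n s(a,b) := by
    intro t ht hcr
    have h2 := Crosses_sg.mpr hcr
    rw [Sg_invol] at h2
    have h3 := A _ ((Sg_mem hCS).mp ht) h2
    rw [← Sg_invol (e := t), h3]
  have hFF' : ¬ Crosses (2*n+2) s(c,d) (Sg n s(c,d)) := by
    by_cases hcent : IsCentral n s(a,b)
    · have hba' : b = sg n a := central_opp hcent
      have hsga : sg n a = b := hba'.symm
      have hsgb : sg n b = a := by rw [hba', sg_sg]
      have harc : arcMem (2*n+2) b a (sg n c) := by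
        have h2 := arc_sg.mpr hc
        rwa [hsga, hsgb] at h2
      have hE1 : EdgeT T b (sg n c) := by
        have h2 := edgeT_sg hCS hac
        rwa [hsga] at h2
      have hE2 : EdgeT T (sg n c) a := by
        have h2 := edgeT_sg hCS hcb
        rwa [hsgb] at h2
      have hdc : d = sg n c := apex_unique hT hba hd hbd hda harc hE1 hE2
      have hfix : Sg n s(c,d) = s(c,d) := by
        rw [hdc, Sg_mk, sg_sg]
        exact Sym2.eq_swap
      rw [hfix]
      exact not_crosses_self _
    · intro hcr
      rw [Sg_mk, crosses_iff] at hcr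
      have killer : ∀ u v : ZMod (2*n+2), EdgeT T u v → s(u,v) ≠ Sg n s(a,b) →
          ¬ crossPairs (2*n+2) u v (sg n c) (sg n d) := by
        intro u v hE hne hcp
        rcases hE with hmemuv | hside | hside
        · have hcp2 : crossPairs (2*n+2) (sg n u) (sg n v) c d := by
            have h2 := crossPairs_sg.mpr hcp
            rwa [sg_sg, sg_sg] at h2
          have hmem2 : s(sg n u, sg n v) ∈ T := by
            have h2 := (Sg_mem hCS).mp hmemuv
            rwa [Sg_mk] at h2
          have h3 := A _ hmem2 (crosses_iff.mpr hcp2)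
          apply hne
          have h4 := congrArg (Sg n) h3
          rw [← Sg_mk, Sg_invol] at h4
          exact h4
        · exact (side_no_cross hside).1 hcp
        · exact (side_no_cross hside).1 (crossPairs_comm_left.mp hcp)
      rcases key1 hc hd hcr with h | h | h | h | h | ⟨h1, h2⟩ | ⟨h1, h2⟩
      · exact killer a c hac q1' h
      · exact killer c b hcb q2' h
      · exact killer b d hbd q3' h
      · exact killer d a hda q4' h
      · -- (a,b) crossed by (sg c, sg d)
        have hcp2 : crossPairs (2*n+2) (sg n a) (sg n b) c d := by
          have h2 := crossPairs_sg.mpr h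
          rwa [sg_sg, sg_sg] at h2
        have hmem2 : s(sg n a, sg n b) ∈ T := by
          have h2 := hSgeT
          rwa [Sg_mk] at h2
        have h3 := A _ hmem2 (crosses_iff.mpr hcp2)
        apply hcent
        rw [← sg_fixed_iff_central hn, Sg_mk]
        exact h3
      · -- sg c = a, sg d = b
        apply hFnotT
        have h3 : Sg n s(c,d) = s(a,b) := by rw [Sg_mk, h1, h2]
        have h4 : s(c,d) = Sg n s(a,b) := by rw [← h3, Sg_invol]
        rw [h4]
        exact hSgeT
      · apply hFnotT
        have h3 : Sg n s(c,d) = s(a,b) := by rw [Sg_mk, h1, h2]; exact Sym2.eq_swap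
        have h4 : s(c,d) = Sg n s(a,b) := by rw [← h3, Sg_invol]
        rw [h4]
        exact hSgeT
  -- pairwise noncrossing
  have hnc : ∀ e1 ∈ T0, ∀ e2 ∈ T0, ¬ Crosses (2*n+2) e1 e2 := by
    have base : ∀ t, (t ∈ T ∧ t ≠ s(a,b) ∧ t ≠ Sg n s(a,b)) →
        ¬ Crosses (2*n+2) t s(c,d) ∧ ¬ Crosses (2*n+2) t (Sg n s(c,d)) := by
      rintro t ⟨ht, h1, h2⟩
      exact ⟨fun hcr => h1 (A t ht hcr), fun hcr => h2 (A' t ht hcr)⟩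
    intro e1 h1 e2 h2 hcr
    rw [hmem] at h1 h2
    rcases h1 with h1 | rfl | rfl <;> rcases h2 with h2 | rfl | rfl
    · exact hT.2.1 _ h1.1 _ h2.1 hcr
    · exact (base _ h1).1 hcr
    · exact (base _ h1).2 hcr
    · exact (base _ h2).1 (crosses_symm hcr)
    · exact not_crosses_self _ hcr
    · exact hFF' hcr
    · exact (base _ h2).2 (crosses_symm hcr)
    · exact hFF' (crosses_symm hcr)
    · exact not_crosses_self _ hcr
  -- all diagonals
  have hdiag0 : ∀ t ∈ T0, IsDiagonal (2*n+2) t := by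
    intro t ht
    rw [hmem] at ht
    rcases ht with ht | rfl | rfl
    · exact hT.1 _ ht.1
    · exact new_is_diag hM1 hab hba hc hd
    · rw [Sg_mk]
      have h2 := new_is_diag hM1 hab hba hc hd
      rw [diagonal_iff hM1] at h2 ⊢
      rwa [len_sg_sg, len_sg_sg]
  -- Sg-invariance of T0
  have hinv : ∀ t ∈ T0, Sg n t ∈ T0 := by
    intro t ht
    rw [hmem] at ht ⊢
    rcases ht with ⟨h1, h2, h3⟩ | rfl | rfl
    · refine Or.inl ⟨(Sg_mem hCS).mp h1, ?_, ?_⟩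
      · intro hh
        apply h3
        rw [← hh, Sg_invol]
      · intro hh
        apply h2
        have := congrArg (Sg n) hh
        rwa [Sg_invol, Sg_invol] at this
    · exact Or.inr (Or.inr rfl)
    · rw [Sg_invol]
      exact Or.inr (Or.inl rfl)
  -- maximality
  have hcaseE : ∀ x y : ZMod (2*n+2), s(x,y) ∉ T0 → crossPairs (2*n+2) a b x y →
      ∃ h ∈ T0, Crosses (2*n+2) s(x,y) h := by
    intro x y hnotin hcp
    by_cases k1 : crossPairs (2*n+2) a c x y
    · rcases hac with hmemac | hside | hside
      · exact ⟨s(a,c), (hmem _).mpr (Or.inl ⟨hmemac, q1, q1'⟩),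
          crosses_iff.mpr (crossPairs_symm k1)⟩
      · exact absurd k1 (side_no_cross hside).1
      · exact absurd (crossPairs_comm_left.mp k1) (side_no_cross hside).1
    by_cases k2 : crossPairs (2*n+2) c b x y
    · rcases hcb with hmemcb | hside | hside
      · exact ⟨s(c,b), (hmem _).mpr (Or.inl ⟨hmemcb, q2, q2'⟩),
          crosses_iff.mpr (crossPairs_symm k2)⟩
      · exact absurd k2 (side_no_cross hside).1
      · exact absurd (crossPairs_comm_left.mp k2) (side_no_cross hside).1
    by_cases k3 : crossPairs (2*n+2) b d x y
    · rcases hbd with hmembd | hside | hside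
      · exact ⟨s(b,d), (hmem _).mpr (Or.inl ⟨hmembd, q3, q3'⟩),
          crosses_iff.mpr (crossPairs_symm k3)⟩
      · exact absurd k3 (side_no_cross hside).1
      · exact absurd (crossPairs_comm_left.mp k3) (side_no_cross hside).1
    by_cases k4 : crossPairs (2*n+2) d a x y
    · rcases hda with hmemda | hside | hside
      · exact ⟨s(d,a), (hmem _).mpr (Or.inl ⟨hmemda, q4, q4'⟩),
          crosses_iff.mpr (crossPairs_symm k4)⟩
      · exact absurd k4 (side_no_cross hside).1
      · exact absurd (crossPairs_comm_left.mp k4) (side_no_cross hside).1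
    exfalso
    apply hnotin
    rcases key2 hc hd hcp k1 k2 k3 k4 with ⟨rfl, rfl⟩ | ⟨rfl, rfl⟩
    · exact (hmem _).mpr (Or.inr (Or.inl rfl))
    · exact (hmem _).mpr (Or.inr (Or.inl Sym2.eq_swap))
  have hmax : ∀ g, IsDiagonal (2*n+2) g → g ∉ T0 → ∃ h ∈ T0, Crosses (2*n+2) g h := by
    intro g hdg hgnot
    by_cases hgT : g ∈ T
    · have hgO : g = s(a,b) ∨ g = Sg n s(a,b) := by
        by_contra hcon
        push_neg at hcon
        exact hgnot ((hmem g).mpr (Or.inl ⟨hgT, hcon.1, hcon.2⟩))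
      rcases hgO with rfl | rfl
      · exact ⟨s(c,d), (hmem _).mpr (Or.inr (Or.inl rfl)), hCrEF⟩
      · exact ⟨Sg n s(c,d), (hmem _).mpr (Or.inr (Or.inr rfl)), Crosses_sg.mpr hCrEF⟩
    · obtain ⟨t, htT, hcr⟩ := hT.2.2 g hdg hgT
      by_cases htE : t = s(a,b)
      · obtain ⟨x, y, rfl⟩ := sym2_rep g
        rw [htE] at hcr
        exact hcaseE x y hgnot (crossPairs_symm (crosses_iff.mp hcr))
      by_cases htSgE : t = Sg n s(a,b)
      · have hcr2 : Crosses (2*n+2) (Sg n g) s(a,b) := by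
          rw [htSgE] at hcr
          have h4 := Crosses_sg.mpr hcr
          rwa [Sg_invol] at h4
        have hSgnot : Sg n g ∉ T0 := by
          intro hmemSg
          apply hgnot
          have := hinv _ hmemSg
          rwa [Sg_invol] at this
        obtain ⟨x, y, hxy⟩ := sym2_rep (Sg n g)
        rw [hxy] at hcr2 hSgnot
        obtain ⟨h, hhmem, hhcr⟩ := hcaseE x y hSgnot (crossPairs_symm (crosses_iff.mp hcr2))
        refine ⟨Sg n h, hinv _ hhmem, ?_⟩
        rw [← hxy] at hhcr
        have h5 := Crosses_sg.mpr hhcr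
        rwa [Sg_invol] at h5
      · exact ⟨t, (hmem t).mpr (Or.inl ⟨htT, htE, htSgE⟩), hcr⟩
  refine ⟨⟨⟨hdiag0, fun e1 h1 e2 h2 => hnc e1 h1 e2 h2, hmax⟩, fun t ht => hinv t ht⟩, ?_, ?_⟩
  · ext t
    rw [Finset.mem_sdiff, hmem, Finset.mem_insert, Finset.mem_singleton]
    constructor
    · rintro ⟨htT, hnot⟩
      by_contra hcon
      push_neg at hcon
      exact hnot (Or.inl ⟨htT, hcon.1, hcon.2⟩)
    · rintro (rfl | rfl)
      · refine ⟨he, ?_⟩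
        rintro (⟨-, hne, -⟩ | h | h)
        · exact hne rfl
        · exact hFnotT (h ▸ he)
        · exact hSgFnotT (h ▸ he)
      · refine ⟨hSgeT, ?_⟩
        rintro (⟨-, -, hne⟩ | h | h)
        · exact hne rfl
        · exact hFnotT (h ▸ hSgeT)
        · exact hSgFnotT (h ▸ hSgeT)
  · ext t
    rw [Finset.mem_sdiff, hmem, Finset.mem_insert, Finset.mem_singleton]
    constructor
    · rintro ⟨ht0, htT⟩
      rcases ht0 with ⟨h1, -, -⟩ | rfl | rfl
      · exact absurd h1 htT
      · exact Or.inl rfl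
      · exact Or.inr rfl
    · rintro (rfl | rfl)
      · exact ⟨Or.inr (Or.inl rfl), hFnotT⟩
      · exact ⟨Or.inr (Or.inr rfl), hSgFnotT⟩

end Quad
end Master
end TypeBProof

namespace TypeBProof
section Assembly

open scoped Classical

set_option linter.unusedSectionVars false
set_option maxHeartbeats 1600000

variable {n : ℕ} {T : Finset (Sym2 (ZMod (2*n+2)))}
variable (hCS : CSTriangulation n T) (hn : 1 ≤ n)
include hCS hn

lemma get_quad {x y : ZMod (2*n+2)} (he : s(x,y) ∈ T) :
    ∃ c d, arcMem (2*n+2) x y c ∧ EdgeT T x c ∧ EdgeT T c y ∧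
      arcMem (2*n+2) y x d ∧ EdgeT T y d ∧ EdgeT T d x := by
  have hT := hCS.1
  have hM : (4:ℕ) ≤ 2*n+2 := by omega
  obtain ⟨hab, hba⟩ := diag_facts hT hM he
  obtain ⟨c, hc, h1, h2⟩ := apex_exists hT (Or.inl he) hab
  obtain ⟨d, hd, h3, h4⟩ := apex_exists hT (Or.inl (by rw [Sym2.eq_swap]; exact he)) hba
  exact ⟨c, d, hc, h1, h2, hd, h3, h4⟩

lemma flip_exists_orbit {e : Sym2 (ZMod (2*n+2))} (he : e ∈ T) :
    ∃ T' f, CSTriangulation n T' ∧ T \ T' = {e, Sg n e} ∧ T' \ T = {f, Sg n f} := by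
  obtain ⟨x, y, rfl⟩ := sym2_rep e
  obtain ⟨c, d, hc, h1, h2, hd, h3, h4⟩ := get_quad hCS hn he
  obtain ⟨hcst, hd1, hd2⟩ := flip_works hCS hn he hc h1 h2 hd h3 h4
  exact ⟨_, s(c,d), hcst, hd1, hd2⟩

lemma flip_unique_orbit {e : Sym2 (ZMod (2*n+2))} (he : e ∈ T)
    {T1 T2 : Finset (Sym2 (ZMod (2*n+2)))}
    (h1 : CSTriangulation n T1) (h2 : CSTriangulation n T2)
    (hdiff1 : T \ T1 = {e, Sg n e}) (hdiff2 : T \ T2 = {e, Sg n e}) : T1 = T2 := by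
  obtain ⟨x, y, rfl⟩ := sym2_rep e
  obtain ⟨c, d, hc, e1, e2, hd, e3, e4⟩ := get_quad hCS hn he
  rw [forced_eq hCS hn he hc e1 e2 hd e3 e4 h1 hdiff1,
    forced_eq hCS hn he hc e1 e2 hd e3 e4 h2 hdiff2]

lemma neighbor_diff {T' : Finset (Sym2 (ZMod (2*n+2)))} (hCS' : CSTriangulation n T')
    (hne : T ≠ T') (hc1 : (T \ T').card ≤ 2) :
    ∃ e ∈ T, T \ T' = {e, Sg n e} := by
  have hT := hCS.1
  have hT' := hCS'.1
  have hne1 : ∃ e, e ∈ T \ T' := by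
    by_contra h
    push_neg at h
    have hsub : T ⊆ T' := by
      intro t ht
      by_contra hnt
      exact h t (Finset.mem_sdiff.mpr ⟨ht, hnt⟩)
    have hg : ∃ g, g ∈ T' \ T := by
      by_contra h2
      push_neg at h2
      apply hne
      apply Finset.Subset.antisymm hsub
      intro g hgmem
      by_contra hng
      exact h2 g (Finset.mem_sdiff.mpr ⟨hgmem, hng⟩)
    obtain ⟨g, hgmem⟩ := hg
    rw [Finset.mem_sdiff] at hgmem
    obtain ⟨t, htT, hcr⟩ := hT.2.2 g (hT'.1 g hgmem.1) hgmem.2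
    exact hT'.2.1 g hgmem.1 t (hsub htT) hcr
  obtain ⟨e, hemem⟩ := hne1
  have heT : e ∈ T := (Finset.mem_sdiff.mp hemem).1
  have heT' : e ∉ T' := (Finset.mem_sdiff.mp hemem).2
  have hSgmem : Sg n e ∈ T \ T' := by
    rw [Finset.mem_sdiff]
    refine ⟨(Sg_mem hCS).mp heT, ?_⟩
    intro h
    exact heT' ((Sg_mem hCS').mpr h)
  refine ⟨e, heT, ?_⟩
  apply Finset.Subset.antisymm
  · intro t ht
    rw [Finset.mem_insert, Finset.mem_singleton]
    by_contra hcon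
    push_neg at hcon
    obtain ⟨ht1, ht2⟩ := hcon
    have htT : t ∈ T := (Finset.mem_sdiff.mp ht).1
    by_cases hee : Sg n e = e
    · by_cases htt : Sg n t = t
      · obtain ⟨D, -, hDuniq⟩ := exists_unique_central hCS hn
        have hce : e = D := hDuniq e ⟨(sg_fixed_iff_central hn).mp hee, heT⟩
        have hct : t = D := hDuniq t ⟨(sg_fixed_iff_central hn).mp htt, htT⟩
        exact ht1 (hct.trans hce.symm)
      · have hSgt : Sg n t ∈ T \ T' := by
          rw [Finset.mem_sdiff]
          refine ⟨(Sg_mem hCS).mp htT, ?_⟩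
          intro h
          exact (Finset.mem_sdiff.mp ht).2 ((Sg_mem hCS').mpr h)
        have hsub3 : ({e, t, Sg n t} : Finset _) ⊆ T \ T' := by
          intro z hz
          rw [Finset.mem_insert, Finset.mem_insert, Finset.mem_singleton] at hz
          rcases hz with rfl | rfl | rfl
          · exact hemem
          · exact ht
          · exact hSgt
        have hcard3 : ({e, t, Sg n t} : Finset _).card = 3 := by
          rw [Finset.card_insert_of_notMem, Finset.card_insert_of_notMem,
            Finset.card_singleton]
          · rw [Finset.mem_singleton]
            exact fun h => htt h.symm
          · rw [Finset.mem_insert, Finset.mem_singleton]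
            rintro (h | h)
            · exact ht1 h.symm
            · apply ht1
              have h2 := congrArg (Sg n) h
              rw [Sg_invol, hee] at h2
              exact h2.symm
        have := Finset.card_le_card hsub3
        omega
    · have hsub3 : ({e, Sg n e, t} : Finset _) ⊆ T \ T' := by
        intro z hz
        rw [Finset.mem_insert, Finset.mem_insert, Finset.mem_singleton] at hz
        rcases hz with rfl | rfl | rfl
        · exact hemem
        · exact hSgmem
        · exact ht
      have hcard3 : ({e, Sg n e, t} : Finset _).card = 3 := by
        rw [Finset.card_insert_of_notMem, Finset.card_insert_of_notMem,
          Finset.card_singleton]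
        · rw [Finset.mem_singleton]
          exact fun h => ht2 h.symm
        · rw [Finset.mem_insert, Finset.mem_singleton]
          rintro (h | h)
          · exact hee h.symm
          · exact ht1 h.symm
      have := Finset.card_le_card hsub3
      omega
  · intro t ht
    rw [Finset.mem_insert, Finset.mem_singleton] at ht
    rcases ht with rfl | rfl
    · exact hemem
    · exact hSgmem

lemma card_orbs :
    (T.image (fun e => ({e, Sg n e} : Finset (Sym2 (ZMod (2*n+2)))))).card = n := by
  obtain ⟨D, ⟨hDc, hDT⟩, hDuniq⟩ := exists_unique_central hCS hn
  have hDfix : Sg n D = D := (sg_fixed_iff_central hn).mpr hDc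
  set orb : Sym2 (ZMod (2*n+2)) → Finset (Sym2 (ZMod (2*n+2))) :=
    fun e => {e, Sg n e} with horb
  have horbself : ∀ e, e ∈ orb e := fun e => Finset.mem_insert_self _ _
  have hfib : ∀ e ∈ T, (T.filter (fun t => orb t = orb e)).card =
      if orb e = orb D then 1 else 2 := by
    intro e heT
    have hfil : T.filter (fun t => orb t = orb e) = orb e := by
      apply Finset.Subset.antisymm
      · intro t htf
        rw [Finset.mem_filter] at htf
        exact htf.2 ▸ horbself t
      · intro t htmem
        rw [horb, Finset.mem_insert, Finset.mem_singleton] at htmem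
        rw [Finset.mem_filter]
        rcases htmem with rfl | rfl
        · exact ⟨heT, rfl⟩
        · refine ⟨(Sg_mem hCS).mp heT, ?_⟩
          show ({Sg n e, Sg n (Sg n e)} : Finset _) = {e, Sg n e}
          rw [Sg_invol]
          exact Finset.pair_comm _ _
    rw [hfil]
    by_cases hcent : Sg n e = e
    · have heD : e = D := hDuniq e ⟨(sg_fixed_iff_central hn).mp hcent, heT⟩
      rw [if_pos (by rw [heD])]
      show ({e, Sg n e} : Finset _).card = 1
      rw [hcent]
      simp
    · rw [if_neg ?_]
      · show ({e, Sg n e} : Finset _).card = 2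
        rw [Finset.card_insert_of_notMem, Finset.card_singleton]
        rw [Finset.mem_singleton]
        exact fun h => hcent h.symm
      · intro horbeq
        apply hcent
        have h2 : e ∈ orb D := horbeq ▸ horbself e
        simp only [horb, hDfix, Finset.mem_insert, Finset.mem_singleton, or_self] at h2
        rw [h2, hDfix]
  have hfib' : ∀ O ∈ T.image orb, (T.filter (fun t => orb t = O)).card =
      if O = orb D then 1 else 2 := by
    intro O hO
    obtain ⟨e, heT, rfl⟩ := Finset.mem_image.mp hO
    exact hfib e heT
  have hsum := Finset.card_eq_sum_card_image orb T
  have hDin : orb D ∈ T.image orb := Finset.mem_image_of_mem _ hDT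
  have h2 : ∑ O ∈ T.image orb, (T.filter (fun t => orb t = O)).card =
      1 + 2 * ((T.image orb).card - 1) := by
    conv_lhs => rw [← Finset.insert_erase hDin]
    rw [Finset.sum_insert (Finset.notMem_erase _ _), hfib' _ hDin, if_pos rfl]
    have h3 : ∑ O ∈ (T.image orb).erase (orb D), (T.filter (fun t => orb t = O)).card
        = ((T.image orb).erase (orb D)).card * 2 := by
      rw [Finset.sum_congr rfl (fun O hO => by
        rw [hfib' O (Finset.mem_of_mem_erase hO), if_neg (Finset.ne_of_mem_erase hO)]),
        Finset.sum_const, smul_eq_mul]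
    rw [h3, Finset.card_erase_of_mem hDin]
    have hpos : 1 ≤ (T.image orb).card := Finset.card_pos.mpr ⟨orb D, hDin⟩
    omega
  have hcT := card_T_CS hCS hn
  have hpos : 1 ≤ (T.image orb).card := Finset.card_pos.mpr ⟨orb D, hDin⟩
  omega

end Assembly
end TypeBProof

open TypeBProof in
/-- For `n ≥ 1`, the type-B associahedron graph is regular of degree `n`; every vertex
lies in exactly one class; each vertex has at most one neighbor outside its class. -/
theorem typeB_regular_and_partition (n : ℕ) (hn : 1 ≤ n) :
    (∀ T : {T : Finset (Sym2 (ZMod (2 * n + 2))) // CSTriangulation n T},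
        Nat.card {T' // (typeBGraph n).Adj T T'} = n) ∧
    (∀ T : {T : Finset (Sym2 (ZMod (2 * n + 2))) // CSTriangulation n T},
        ∃! D : Sym2 (ZMod (2 * n + 2)), IsCentral n D ∧ D ∈ T.val) ∧
    (∀ T : {T : Finset (Sym2 (ZMod (2 * n + 2))) // CSTriangulation n T},
        ∀ D : Sym2 (ZMod (2 * n + 2)), IsCentral n D → D ∈ T.val →
          Nat.card {T' // (typeBGraph n).Adj T T' ∧ D ∉ T'.val} ≤ 1) := by
  classical
  refine ⟨?_, ?_, ?_⟩
  · intro T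
    set orb : Sym2 (ZMod (2*n+2)) → Finset (Sym2 (ZMod (2*n+2))) :=
      fun e => {e, Sg n e} with horb
    have hmemf : ∀ T' : {T' // (typeBGraph n).Adj T T'},
        T.val \ T'.1.val ∈ T.val.image orb := by
      intro T'
      obtain ⟨hne, h1, h2⟩ : T ≠ T'.1 ∧ (T.val \ T'.1.val).card ≤ 2 ∧
          (T'.1.val \ T.val).card ≤ 2 := T'.2
      obtain ⟨e, heT, hdiff⟩ := neighbor_diff T.2 hn T'.1.2
        (fun h => hne (Subtype.ext h)) h1
      rw [hdiff]
      exact Finset.mem_image_of_mem _ heT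
    set f : {T' // (typeBGraph n).Adj T T'} → {O // O ∈ T.val.image orb} :=
      fun T' => ⟨T.val \ T'.1.val, hmemf T'⟩ with hfdef
    have hbij : Function.Bijective f := by
      constructor
      · intro T1 T2 hf
        have hfv : T.val \ T1.1.val = T.val \ T2.1.val := by
          have h3 := congrArg Subtype.val hf
          simpa [hfdef] using h3
        obtain ⟨hne1, h11, h12⟩ : T ≠ T1.1 ∧ (T.val \ T1.1.val).card ≤ 2 ∧
            (T1.1.val \ T.val).card ≤ 2 := T1.2
        obtain ⟨e, heT, hdiff1⟩ := neighbor_diff T.2 hn T1.1.2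
          (fun h => hne1 (Subtype.ext h)) h11
        have hdiff2 : T.val \ T2.1.val = {e, Sg n e} := by rw [← hfv, hdiff1]
        have h4 := flip_unique_orbit T.2 hn heT T1.1.2 T2.1.2 hdiff1 hdiff2
        exact Subtype.ext (Subtype.ext h4)
      · rintro ⟨O, hO⟩
        obtain ⟨e, heT, rfl⟩ := Finset.mem_image.mp hO
        obtain ⟨T0, f0, hcst, hd1, hd2⟩ := flip_exists_orbit T.2 hn heT
        have hein : e ∈ T.val ∧ e ∉ T0 := by
          have h5 : e ∈ T.val \ T0 := by
            rw [hd1]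
            exact Finset.mem_insert_self _ _
          exact Finset.mem_sdiff.mp h5
        have hne : T ≠ (⟨T0, hcst⟩ :
            {T : Finset (Sym2 (ZMod (2 * n + 2))) // CSTriangulation n T}) := by
          intro h
          have hval : T.val = T0 := congrArg Subtype.val h
          rw [hval] at hein
          exact hein.2 hein.1
        have hadj : (typeBGraph n).Adj T ⟨T0, hcst⟩ := by
          refine (⟨hne, ?_, ?_⟩ : T ≠ ⟨T0, hcst⟩ ∧ (T.val \ T0).card ≤ 2 ∧ (T0 \ T.val).card ≤ 2)
          · show (T.val \ T0).card ≤ 2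
            rw [hd1]
            exact le_trans (Finset.card_insert_le _ _) (by simp)
          · show (T0 \ T.val).card ≤ 2
            rw [hd2]
            exact le_trans (Finset.card_insert_le _ _) (by simp)
        refine ⟨⟨⟨T0, hcst⟩, hadj⟩, ?_⟩
        apply Subtype.ext
        show T.val \ T0 = orb e
        rw [hd1]
    have h1 := Nat.card_eq_of_bijective f hbij
    have h2 : Nat.card {O // O ∈ T.val.image orb} = (T.val.image orb).card :=
      Nat.card_eq_finsetCard _
    rw [h1, h2]
    exact card_orbs T.2 hn
  · intro T
    exact exists_unique_central T.2 hn
  · intro T D hDc hDT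
    have hfix : Sg n D = D := (sg_fixed_iff_central hn).mpr hDc
    have hZdiff : ∀ Z : {T' // (typeBGraph n).Adj T T' ∧ D ∉ T'.val},
        T.val \ Z.1.val = {D, Sg n D} := by
      intro Z
      obtain ⟨⟨hne, h1, h2⟩, hDnot⟩ : (T ≠ Z.1 ∧ (T.val \ Z.1.val).card ≤ 2 ∧
          (Z.1.val \ T.val).card ≤ 2) ∧ D ∉ Z.1.val := Z.2
      obtain ⟨e, heT, hdiff⟩ := neighbor_diff T.2 hn Z.1.2
        (fun h => hne (Subtype.ext h)) h1
      have hDin : D ∈ T.val \ Z.1.val := Finset.mem_sdiff.mpr ⟨hDT, hDnot⟩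
      rw [hdiff, Finset.mem_insert, Finset.mem_singleton] at hDin
      rw [hdiff]
      rcases hDin with rfl | hDin
      · rfl
      · have heD : e = Sg n D := by
          have h3 := congrArg (Sg n) hDin
          rw [Sg_invol] at h3
          exact h3.symm
        have he2 : e = D := heD.trans hfix
        rw [he2]
    have hsub : ∀ Z W : {T' // (typeBGraph n).Adj T T' ∧ D ∉ T'.val}, Z = W := by
      intro Z W
      have h4 := flip_unique_orbit T.2 hn hDT Z.1.2 W.1.2 (hZdiff Z) (hZdiff W)
      exact Subtype.ext (Subtype.ext h4)
    rcases isEmpty_or_nonempty {T' // (typeBGraph n).Adj T T' ∧ D ∉ T'.val} with hE | hNE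
    · rw [Nat.card_of_isEmpty]
      omega
    · haveI : Subsingleton {T' // (typeBGraph n).Adj T T' ∧ D ∉ T'.val} := ⟨hsub⟩
      rw [Nat.card_unique]
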